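/- (Cokernel Complex Lemma.) Let M i j (i, j ≥ 1) with horizontal maps h i j : M i (j+1) → M i j and vertical maps v i j : M (i+1) j → M i j form a commutative co-grid with exact rows and exact columns (so row i is ⋯ → M i 3 → M i 2 → M i 1 and column j is ⋯ → M 3 j → M 2 j → M 1 j). Let W i = Cok(h i 1 : M i 2 → M i 1) with maps ω i : W (i+1) → W i induced by v i 1, and let U j = Cok(v 1 j : M 2 j → M 1 j) with maps υ j : U (j+1) → U j induced by h 1 j. Then for every n ≥ 1, the homology at position n (counted from the right end) of the cokernel complex ⋯ → W₃ → W₂ → W₁ → 0 is isomorphic as an R-module to the homology at position n of the cokernel complex ⋯ → U₃ → U₂ → U₁ → 0. (Here homology at position 1 means Cok ω₁ = W₁/Im ω₁, resp. Cok υ₁; homology at position n ≥ 2 means Ker ωₙ₋₁ / Im ωₙ, resp. Ker υₙ₋₁ / Im υₙ.) -/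

import Mathlib

open Submodule LinearMap

section
variable {R : Type*} [Ring R]

/-- Bridging iso between subquotients of equal submodules. -/
lemma CCL.quotSubAux {N : Type*} [AddCommGroup N] [Module R N]
    (p q d e : Submodule R N) (hpq : p = q) (hde : d = e) :
    Nonempty ((↥p ⧸ d.comap p.subtype) ≃ₗ[R] (↥q ⧸ e.comap q.subtype)) := by
  subst hpq; subst hde; exact ⟨LinearEquiv.refl _ _⟩

/-- Cokernel of an induced map on a quotient. -/
lemma CCL.cokAux {N N₁ : Type*} [AddCommGroup N] [Module R N] [AddCommGroup N₁] [Module R N₁]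
    (P : Submodule R N) (P₁ : Submodule R N₁) (v₀ : N₁ →ₗ[R] N)
    (ω₀ : (N₁ ⧸ P₁) →ₗ[R] (N ⧸ P)) (hω₀ : ω₀ ∘ₗ P₁.mkQ = P.mkQ ∘ₗ v₀) :
    Nonempty (((N ⧸ P) ⧸ LinearMap.range ω₀) ≃ₗ[R] (N ⧸ (P ⊔ LinearMap.range v₀))) := by
  have h0 : P.map P.mkQ = ⊥ := by
    rw [eq_bot_iff]
    rintro x ⟨y, hy, rfl⟩
    simpa [Submodule.Quotient.mk_eq_zero] using hy
  have h1 : LinearMap.range ω₀ = (P ⊔ LinearMap.range v₀).map P.mkQ := by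
    rw [Submodule.map_sup, h0, bot_sup_eq]
    have : LinearMap.range ω₀ = LinearMap.range (ω₀ ∘ₗ P₁.mkQ) := by
      rw [LinearMap.range_comp, Submodule.range_mkQ, Submodule.map_top]
    rw [this, hω₀, LinearMap.range_comp]
  exact ⟨(Submodule.quotEquivOfEq _ _ h1).trans
    (Submodule.quotientQuotientEquivQuotient P (P ⊔ LinearMap.range v₀) le_sup_left)⟩

/-- The homology `Ker ω₀ / Im ω₁` of the cokernel complex expressed as an explicit
subquotient at the module level. -/
lemma CCL.kerAux {N₂ N₁ N₀ : Type*} [AddCommGroup N₂] [Module R N₂] [AddCommGroup N₁]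
    [Module R N₁] [AddCommGroup N₀] [Module R N₀]
    (P₂ : Submodule R N₂) (P₁ : Submodule R N₁) (P₀ : Submodule R N₀)
    (v₁ : N₂ →ₗ[R] N₁) (v₀ : N₁ →ₗ[R] N₀)
    (ω₀ : (N₁ ⧸ P₁) →ₗ[R] (N₀ ⧸ P₀)) (hω₀ : ω₀ ∘ₗ P₁.mkQ = P₀.mkQ ∘ₗ v₀)
    (ω₁ : (N₂ ⧸ P₂) →ₗ[R] (N₁ ⧸ P₁)) (hω₁ : ω₁ ∘ₗ P₂.mkQ = P₁.mkQ ∘ₗ v₁) :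
    Nonempty ((↥(LinearMap.ker ω₀) ⧸ (LinearMap.range ω₁).comap (LinearMap.ker ω₀).subtype)
      ≃ₗ[R] (↥(P₀.comap v₀) ⧸
        ((LinearMap.range v₁ ⊔ P₁).comap (P₀.comap v₀).subtype))) := by
  have hω₀' : ∀ x : N₁, ω₀ (P₁.mkQ x) = P₀.mkQ (v₀ x) := fun x =>
    congrFun (congrArg (fun f => f.toFun) hω₀) x
  have hω₁' : ∀ x : N₂, ω₁ (P₂.mkQ x) = P₁.mkQ (v₁ x) := fun x =>
    congrFun (congrArg (fun f => f.toFun) hω₁) x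
  set X : Submodule R N₁ := P₀.comap v₀ with hX
  have hmem : ∀ x : ↥X, (P₁.mkQ ∘ₗ X.subtype) x ∈ LinearMap.ker ω₀ := by
    rintro ⟨x, hx⟩
    simp only [LinearMap.mem_ker, LinearMap.comp_apply, Submodule.subtype_apply]
    rw [hω₀' x]
    simpa [hX, Submodule.Quotient.mk_eq_zero] using hx
  set φ : ↥X →ₗ[R] ↥(LinearMap.ker ω₀) :=
    LinearMap.codRestrict _ (P₁.mkQ ∘ₗ X.subtype) hmem with hφ
  set ψ : ↥X →ₗ[R] (↥(LinearMap.ker ω₀) ⧸ (LinearMap.range ω₁).comap (LinearMap.ker ω₀).subtype)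
    := ((LinearMap.range ω₁).comap (LinearMap.ker ω₀).subtype).mkQ ∘ₗ φ with hψ
  have hφsurj : Function.Surjective φ := by
    rintro ⟨w, hw⟩
    obtain ⟨x, rfl⟩ := P₁.mkQ_surjective w
    have hx : x ∈ X := by
      rw [hX, Submodule.mem_comap, ← Submodule.Quotient.mk_eq_zero]
      rw [← Submodule.mkQ_apply, ← hω₀' x]
      exact hw
    exact ⟨⟨x, hx⟩, Subtype.ext rfl⟩
  have hψsurj : Function.Surjective ψ := by
    rw [hψ]
    exact (Submodule.mkQ_surjective _).comp hφsurj
  have hker : LinearMap.ker ψ = (LinearMap.range v₁ ⊔ P₁).comap X.subtype := by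
    ext ⟨x, hx⟩
    simp only [hψ, LinearMap.mem_ker, LinearMap.comp_apply, Submodule.mkQ_apply,
      Submodule.Quotient.mk_eq_zero, Submodule.mem_comap, Submodule.subtype_apply]
    constructor
    · intro hmem'
      have : (P₁.mkQ x : N₁ ⧸ P₁) ∈ LinearMap.range ω₁ := by
        simpa [hφ, LinearMap.codRestrict] using hmem'
      obtain ⟨w, hw⟩ := this
      obtain ⟨z, rfl⟩ := P₂.mkQ_surjective w
      rw [hω₁' z] at hw
      have : x - v₁ z ∈ P₁ := by
        rw [← Submodule.Quotient.eq P₁]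
        simpa [Submodule.mkQ_apply] using hw.symm
      have : x = v₁ z + (x - v₁ z) := by abel
      rw [this]
      exact Submodule.add_mem_sup (LinearMap.mem_range_self v₁ z) ‹x - v₁ z ∈ P₁›
    · intro hmem'
      rw [Submodule.mem_sup] at hmem'
      obtain ⟨a, ⟨z, rfl⟩, b, hb, rfl⟩ := hmem'
      show φ ⟨v₁ z + b, hx⟩ ∈ (LinearMap.range ω₁).comap (LinearMap.ker ω₀).subtype
      simp only [Submodule.mem_comap, Submodule.subtype_apply]
      have : ((φ ⟨v₁ z + b, hx⟩ : ↥(LinearMap.ker ω₀)) : N₁ ⧸ P₁) = P₁.mkQ (v₁ z + b) := rfl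
      rw [this]
      refine ⟨P₂.mkQ z, ?_⟩
      rw [hω₁' z]
      rw [map_add]
      simpa [Submodule.Quotient.mk_eq_zero] using hb
  exact ⟨((Submodule.quotEquivOfEq _ _ hker.symm).trans
    (ψ.quotKerEquivOfSurjective hψsurj)).symm⟩

end

open Submodule LinearMap
section
variable {R : Type*} [Ring R]

/-- Base case: the homology subquotient at the corner is isomorphic to the
symmetric expression `(Im h₀₀ ∩ Im v₀₀) / Im (h₀₀ ∘ v₀₁)`. -/
lemma CCL.baseAux {A B B' C D : Type*} [AddCommGroup A] [Module R A]
    [AddCommGroup B] [Module R B] [AddCommGroup B'] [Module R B']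
    [AddCommGroup C] [Module R C] [AddCommGroup D] [Module R D]
    (v0 : B →ₗ[R] A) (v1 : B' →ₗ[R] B) (h0 : C →ₗ[R] A) (h1 : D →ₗ[R] B) (v01 : D →ₗ[R] C)
    (hco : h0 ∘ₗ v01 = v0 ∘ₗ h1)
    (hex : LinearMap.range v1 = LinearMap.ker v0) :
    Nonempty ((↥((LinearMap.range h0).comap v0) ⧸
        (LinearMap.range v1 ⊔ LinearMap.range h1).comap ((LinearMap.range h0).comap v0).subtype)
      ≃ₗ[R] (↥(LinearMap.range h0 ⊓ LinearMap.range v0) ⧸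
        (LinearMap.range (h0 ∘ₗ v01)).comap
          (LinearMap.range h0 ⊓ LinearMap.range v0).subtype)) := by
  have hco' : ∀ x : D, h0 (v01 x) = v0 (h1 x) := fun x =>
    congrFun (congrArg (fun f => f.toFun) hco) x
  set P : Submodule R (B × C) :=
    LinearMap.ker (v0 ∘ₗ LinearMap.fst R B C - h0 ∘ₗ LinearMap.snd R B C) with hP
  have hPm : ∀ p : B × C, p ∈ P ↔ v0 p.1 = h0 p.2 := by
    intro p
    rw [hP, LinearMap.mem_ker, LinearMap.sub_apply, sub_eq_zero]
    rfl
  set X : Submodule R B := (LinearMap.range h0).comap v0 with hXdef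
  set S : Submodule R A := LinearMap.range h0 ⊓ LinearMap.range v0 with hSdef
  have hmem1 : ∀ p : ↥P, (LinearMap.fst R B C ∘ₗ P.subtype) p ∈ X := by
    rintro ⟨⟨x, s⟩, hp⟩
    rw [hPm] at hp
    exact ⟨s, hp.symm⟩
  have hmem2 : ∀ p : ↥P, (v0 ∘ₗ LinearMap.fst R B C ∘ₗ P.subtype) p ∈ S := by
    rintro ⟨⟨x, s⟩, hp⟩
    rw [hPm] at hp
    exact ⟨⟨s, hp.symm⟩, ⟨x, rfl⟩⟩
  set α : ↥P →ₗ[R] (↥X ⧸ (LinearMap.range v1 ⊔ LinearMap.range h1).comap X.subtype) :=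
    ((LinearMap.range v1 ⊔ LinearMap.range h1).comap X.subtype).mkQ ∘ₗ
      LinearMap.codRestrict X (LinearMap.fst R B C ∘ₗ P.subtype) hmem1 with hα
  set β : ↥P →ₗ[R] (↥S ⧸ (LinearMap.range (h0 ∘ₗ v01)).comap S.subtype) :=
    ((LinearMap.range (h0 ∘ₗ v01)).comap S.subtype).mkQ ∘ₗ
      LinearMap.codRestrict S (v0 ∘ₗ LinearMap.fst R B C ∘ₗ P.subtype) hmem2 with hβ
  have hαsurj : Function.Surjective α := by
    rw [hα]
    refine (Submodule.mkQ_surjective _).comp ?_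
    rintro ⟨x, s, hs⟩
    exact ⟨⟨(x, s), (hPm _).2 hs.symm⟩, Subtype.ext rfl⟩
  have hβsurj : Function.Surjective β := by
    rw [hβ]
    refine (Submodule.mkQ_surjective _).comp ?_
    rintro ⟨t, ⟨s, hs⟩, ⟨x, hx⟩⟩
    exact ⟨⟨(x, s), (hPm _).2 (by rw [hx, hs])⟩, Subtype.ext hx⟩
  have hker : LinearMap.ker α = LinearMap.ker β := by
    ext ⟨⟨x, s⟩, hp⟩
    rw [hPm] at hp
    simp only [hα, hβ, LinearMap.mem_ker, LinearMap.comp_apply, Submodule.mkQ_apply,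
      Submodule.Quotient.mk_eq_zero, Submodule.mem_comap, Submodule.subtype_apply,
      LinearMap.codRestrict_apply]
    show x ∈ LinearMap.range v1 ⊔ LinearMap.range h1 ↔
      v0 x ∈ LinearMap.range (h0 ∘ₗ v01)
    constructor
    · intro hx
      rw [Submodule.mem_sup] at hx
      obtain ⟨a, ⟨za, rfl⟩, b, ⟨zb, rfl⟩, rfl⟩ := hx
      have hza : v0 (v1 za) = 0 := by
        have : v1 za ∈ LinearMap.ker v0 := hex ▸ LinearMap.mem_range_self v1 za
        simpa using this
      refine ⟨zb, ?_⟩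
      rw [LinearMap.comp_apply, hco' zb, map_add, hza, zero_add]
    · rintro ⟨z, hz⟩
      rw [LinearMap.comp_apply, hco' z] at hz
      have : x - h1 z ∈ LinearMap.ker v0 := by
        rw [LinearMap.mem_ker, map_sub, hz, sub_self]
      rw [← hex] at this
      obtain ⟨w, hw⟩ := this
      have : x = v1 w + h1 z := by rw [hw]; abel
      rw [this]
      exact Submodule.add_mem_sup (LinearMap.mem_range_self v1 w) (LinearMap.mem_range_self h1 z)
  exact ⟨(α.quotKerEquivOfSurjective hαsurj).symm.trans
    ((Submodule.quotEquivOfEq _ _ hker).trans (β.quotKerEquivOfSurjective hβsurj))⟩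

end

open Submodule LinearMap
section
universe u
variable {R : Type*} [Ring R]

/-- Step: the homology subquotient at row `m+1`, column `0` is isomorphic to the
corresponding subquotient at row `m`, column `1`. -/
lemma CCL.stepAux (M : ℕ → ℕ → Type u) [∀ i j, AddCommGroup (M i j)] [∀ i j, Module R (M i j)]
    (h : ∀ i j, M i (j + 1) →ₗ[R] M i j) (v : ∀ i j, M (i + 1) j →ₗ[R] M i j)
    (hcomm : ∀ i j, (h i j) ∘ₗ (v i (j + 1)) = (v i j) ∘ₗ (h (i + 1) j))
    (hrow : ∀ i j, LinearMap.range (h i (j + 1)) = LinearMap.ker (h i j))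
    (hcol : ∀ i j, LinearMap.range (v (i + 1) j) = LinearMap.ker (v i j)) (m : ℕ) :
    Nonempty ((↥((LinearMap.range (h (m + 1) 0)).comap (v (m + 1) 0)) ⧸
        (LinearMap.range (v (m + 2) 0) ⊔ LinearMap.range (h (m + 2) 0)).comap
          ((LinearMap.range (h (m + 1) 0)).comap (v (m + 1) 0)).subtype)
      ≃ₗ[R] (↥((LinearMap.range (h m 1)).comap (v m 1)) ⧸
        (LinearMap.range (v (m + 1) 1) ⊔ LinearMap.range (h (m + 1) 1)).comap
          ((LinearMap.range (h m 1)).comap (v m 1)).subtype)) := by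
  have hc : ∀ i j (x : M (i + 1) (j + 1)), h i j (v i (j + 1) x) = v i j (h (i + 1) j x) :=
    fun i j x => congrFun (congrArg (fun f => f.toFun) (hcomm i j)) x
  have hvv : ∀ i j (x : M (i + 2) j), v i j (v (i + 1) j x) = 0 := by
    intro i j x
    have : v (i + 1) j x ∈ LinearMap.ker (v i j) := hcol i j ▸ LinearMap.mem_range_self _ x
    simpa using this
  have hhh : ∀ i j (x : M i (j + 2)), h i j (h i (j + 1) x) = 0 := by
    intro i j x
    have : h i (j + 1) x ∈ LinearMap.ker (h i j) := hrow i j ▸ LinearMap.mem_range_self _ x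
    simpa using this
  set P : Submodule R (M (m + 2) 0 × M (m + 1) 1) :=
    LinearMap.ker ((v (m + 1) 0) ∘ₗ LinearMap.fst R (M (m + 2) 0) (M (m + 1) 1) -
      (h (m + 1) 0) ∘ₗ LinearMap.snd R (M (m + 2) 0) (M (m + 1) 1)) with hP
  have hPm : ∀ p : M (m + 2) 0 × M (m + 1) 1, p ∈ P ↔ v (m + 1) 0 p.1 = h (m + 1) 0 p.2 := by
    intro p
    rw [hP, LinearMap.mem_ker, LinearMap.sub_apply, sub_eq_zero]
    rfl
  set X₁ : Submodule R (M (m + 2) 0) := (LinearMap.range (h (m + 1) 0)).comap (v (m + 1) 0)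
  set X₂ : Submodule R (M (m + 1) 1) := (LinearMap.range (h m 1)).comap (v m 1)
  have hmem1 : ∀ p : ↥P,
      (LinearMap.fst R (M (m + 2) 0) (M (m + 1) 1) ∘ₗ P.subtype) p ∈ X₁ := by
    rintro ⟨⟨x, y⟩, hp⟩
    rw [hPm] at hp
    exact ⟨y, hp.symm⟩
  have hmem2 : ∀ p : ↥P,
      (LinearMap.snd R (M (m + 2) 0) (M (m + 1) 1) ∘ₗ P.subtype) p ∈ X₂ := by
    rintro ⟨⟨x, y⟩, hp⟩
    rw [hPm] at hp
    show v m 1 y ∈ LinearMap.range (h m 1)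
    rw [hrow m 0, LinearMap.mem_ker, hc m 0 y, ← hp, hvv m 0]
  set α : ↥P →ₗ[R] (↥X₁ ⧸
      (LinearMap.range (v (m + 2) 0) ⊔ LinearMap.range (h (m + 2) 0)).comap X₁.subtype) :=
    ((LinearMap.range (v (m + 2) 0) ⊔ LinearMap.range (h (m + 2) 0)).comap X₁.subtype).mkQ ∘ₗ
      LinearMap.codRestrict X₁ (LinearMap.fst R (M (m + 2) 0) (M (m + 1) 1) ∘ₗ P.subtype) hmem1
    with hα
  set β : ↥P →ₗ[R] (↥X₂ ⧸
      (LinearMap.range (v (m + 1) 1) ⊔ LinearMap.range (h (m + 1) 1)).comap X₂.subtype) :=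
    ((LinearMap.range (v (m + 1) 1) ⊔ LinearMap.range (h (m + 1) 1)).comap X₂.subtype).mkQ ∘ₗ
      LinearMap.codRestrict X₂ (LinearMap.snd R (M (m + 2) 0) (M (m + 1) 1) ∘ₗ P.subtype) hmem2
    with hβ
  have hαsurj : Function.Surjective α := by
    rw [hα]
    refine (Submodule.mkQ_surjective _).comp ?_
    rintro ⟨x, y, hy⟩
    exact ⟨⟨(x, y), (hPm _).2 hy.symm⟩, Subtype.ext rfl⟩
  have hβsurj : Function.Surjective β := by
    rw [hβ]
    refine (Submodule.mkQ_surjective _).comp ?_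
    rintro ⟨y, hy⟩
    obtain ⟨z, hz⟩ := hy
    have : h (m + 1) 0 y ∈ LinearMap.ker (v m 0) := by
      rw [LinearMap.mem_ker, ← hc m 0 y, ← hz, hhh m 0]
    rw [← hcol m 0] at this
    obtain ⟨x, hx⟩ := this
    exact ⟨⟨(x, y), (hPm _).2 hx⟩, Subtype.ext rfl⟩
  have hker : LinearMap.ker α = LinearMap.ker β := by
    ext ⟨⟨x, y⟩, hp⟩
    rw [hPm] at hp
    simp only [hα, hβ, LinearMap.mem_ker, LinearMap.comp_apply, Submodule.mkQ_apply,
      Submodule.Quotient.mk_eq_zero, Submodule.mem_comap, Submodule.subtype_apply,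
      LinearMap.codRestrict_apply]
    show x ∈ LinearMap.range (v (m + 2) 0) ⊔ LinearMap.range (h (m + 2) 0) ↔
      y ∈ LinearMap.range (v (m + 1) 1) ⊔ LinearMap.range (h (m + 1) 1)
    constructor
    · intro hx
      rw [Submodule.mem_sup] at hx
      obtain ⟨a, ⟨za, rfl⟩, b, ⟨zb, rfl⟩, rfl⟩ := hx
      have h1 : h (m + 1) 0 y = h (m + 1) 0 (v (m + 1) 1 zb) := by
        rw [hc (m + 1) 0 zb, ← hp, map_add, hvv (m + 1) 0, zero_add]
      have h2 : y - v (m + 1) 1 zb ∈ LinearMap.ker (h (m + 1) 0) := by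
        rw [LinearMap.mem_ker, map_sub, h1, sub_self]
      rw [← hrow (m + 1) 0] at h2
      obtain ⟨w, hw⟩ := h2
      have : y = v (m + 1) 1 zb + h (m + 1) 1 w := by rw [hw]; abel
      rw [this]
      exact Submodule.add_mem_sup (LinearMap.mem_range_self _ zb) (LinearMap.mem_range_self _ w)
    · intro hy
      rw [Submodule.mem_sup] at hy
      obtain ⟨a, ⟨za, rfl⟩, b, ⟨zb, rfl⟩, rfl⟩ := hy
      have h1 : v (m + 1) 0 x = v (m + 1) 0 (h (m + 2) 0 za) := by
        rw [hp, map_add, hhh (m + 1) 0, add_zero, hc (m + 1) 0 za]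
      have h2 : x - h (m + 2) 0 za ∈ LinearMap.ker (v (m + 1) 0) := by
        rw [LinearMap.mem_ker, map_sub, h1, sub_self]
      rw [← hcol (m + 1) 0] at h2
      obtain ⟨w, hw⟩ := h2
      have : x = v (m + 2) 0 w + h (m + 2) 0 za := by rw [hw]; abel
      rw [this]
      exact Submodule.add_mem_sup (LinearMap.mem_range_self _ w) (LinearMap.mem_range_self _ za)
  exact ⟨(α.quotKerEquivOfSurjective hαsurj).symm.trans
    ((Submodule.quotEquivOfEq _ _ hker).trans (β.quotKerEquivOfSurjective hβsurj))⟩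

end

open Submodule LinearMap
section
universe u
variable {R : Type*} [Ring R]

/-- The inductive core: `HW n ≃ HU n` for every exact co-grid. -/
lemma CCL.gridT (n : ℕ) : ∀ (M : ℕ → ℕ → Type u) (iA : ∀ i j, AddCommGroup (M i j))
    (iM : ∀ i j, Module R (M i j))
    (h : ∀ i j, M i (j + 1) →ₗ[R] M i j) (v : ∀ i j, M (i + 1) j →ₗ[R] M i j)
    (_hcomm : ∀ i j, (h i j) ∘ₗ (v i (j + 1)) = (v i j) ∘ₗ (h (i + 1) j))
    (_hrow : ∀ i j, LinearMap.range (h i (j + 1)) = LinearMap.ker (h i j))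
    (_hcol : ∀ i j, LinearMap.range (v (i + 1) j) = LinearMap.ker (v i j)),
    Nonempty ((↥((LinearMap.range (h n 0)).comap (v n 0)) ⧸
        (LinearMap.range (v (n + 1) 0) ⊔ LinearMap.range (h (n + 1) 0)).comap
          ((LinearMap.range (h n 0)).comap (v n 0)).subtype)
      ≃ₗ[R] (↥((LinearMap.range (v 0 n)).comap (h 0 n)) ⧸
        (LinearMap.range (h 0 (n + 1)) ⊔ LinearMap.range (v 0 (n + 1))).comap
          ((LinearMap.range (v 0 n)).comap (h 0 n)).subtype)) := by
  induction n with
  | zero =>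
    intro M iA iM h v hcomm hrow hcol
    obtain ⟨e1⟩ := CCL.baseAux (v 0 0) (v 1 0) (h 0 0) (h 1 0) (v 0 1) (hcomm 0 0) (hcol 0 0)
    obtain ⟨e2⟩ := CCL.baseAux (h 0 0) (h 0 1) (v 0 0) (v 0 1) (h 1 0) (hcomm 0 0).symm
      (hrow 0 0)
    obtain ⟨e3⟩ := CCL.quotSubAux
      (LinearMap.range (h 0 0) ⊓ LinearMap.range (v 0 0))
      (LinearMap.range (v 0 0) ⊓ LinearMap.range (h 0 0))
      (LinearMap.range ((h 0 0) ∘ₗ (v 0 1))) (LinearMap.range ((v 0 0) ∘ₗ (h 1 0)))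
      (inf_comm _ _) (by rw [hcomm 0 0])
    exact ⟨e1.trans (e3.trans e2.symm)⟩
  | succ n ih =>
    intro M iA iM h v hcomm hrow hcol
    obtain ⟨e1⟩ := CCL.stepAux M h v hcomm hrow hcol n
    obtain ⟨e2⟩ := ih (fun i j => M i (j + 1)) (fun i j => iA i (j + 1))
      (fun i j => iM i (j + 1)) (fun i j => h i (j + 1)) (fun i j => v i (j + 1))
      (fun i j => hcomm i (j + 1)) (fun i j => hrow i (j + 1)) (fun i j => hcol i (j + 1))
    exact ⟨e1.trans e2⟩

end



/-- The Cokernel Complex Lemma.  Given a commutative co-grid of `R`-modules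
`M i j` (indexed from `0`, corresponding to the indices `≥ 1` of the paper)
with horizontal maps `h i j : M i (j+1) → M i j` and vertical maps
`v i j : M (i+1) j → M i j`, commuting squares, exact rows and exact columns,
let `W i = Cok (h i 0)` with maps `ω i : W (i+1) → W i` induced by `v i 0`,
and `U j = Cok (v 0 j)` with maps `υ j : U (j+1) → U j` induced by `h 0 j`.
Then the two cokernel complexes `⋯ → W 1 → W 0 → 0` and `⋯ → U 1 → U 0 → 0`
have isomorphic homology in each position: at the rightmost position the
homology is `Cok (ω 0)` (resp. `Cok (υ 0)`), and at position `n + 2` from the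
right it is `Ker (ω n) / Im (ω (n+1))` (resp. `Ker (υ n) / Im (υ (n+1))`). -/
theorem cokernel_complex_lemma {R : Type*} [Ring R]
    (M : ℕ → ℕ → Type*) [∀ i j, AddCommGroup (M i j)] [∀ i j, Module R (M i j)]
    (h : ∀ i j, M i (j + 1) →ₗ[R] M i j)
    (v : ∀ i j, M (i + 1) j →ₗ[R] M i j)
    (hcomm : ∀ i j, (h i j) ∘ₗ (v i (j + 1)) = (v i j) ∘ₗ (h (i + 1) j))
    (hrow : ∀ i j, LinearMap.range (h i (j + 1)) = LinearMap.ker (h i j))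
    (hcol : ∀ i j, LinearMap.range (v (i + 1) j) = LinearMap.ker (v i j))
    (ω : ∀ i, (M (i + 1) 0 ⧸ LinearMap.range (h (i + 1) 0)) →ₗ[R]
      (M i 0 ⧸ LinearMap.range (h i 0)))
    (hω : ∀ i, (ω i) ∘ₗ (LinearMap.range (h (i + 1) 0)).mkQ =
      (LinearMap.range (h i 0)).mkQ ∘ₗ (v i 0))
    (υ : ∀ j, (M 0 (j + 1) ⧸ LinearMap.range (v 0 (j + 1))) →ₗ[R]
      (M 0 j ⧸ LinearMap.range (v 0 j)))
    (hυ : ∀ j, (υ j) ∘ₗ (LinearMap.range (v 0 (j + 1))).mkQ =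
      (LinearMap.range (v 0 j)).mkQ ∘ₗ (h 0 j)) :
    Nonempty (
      ((M 0 0 ⧸ LinearMap.range (h 0 0)) ⧸ LinearMap.range (ω 0))
      ≃ₗ[R]
      ((M 0 0 ⧸ LinearMap.range (v 0 0)) ⧸ LinearMap.range (υ 0))) ∧
    ∀ n : ℕ, Nonempty (
      (↥(LinearMap.ker (ω n)) ⧸
        (LinearMap.range (ω (n + 1))).comap (LinearMap.ker (ω n)).subtype)
      ≃ₗ[R]
      (↥(LinearMap.ker (υ n)) ⧸
        (LinearMap.range (υ (n + 1))).comap (LinearMap.ker (υ n)).subtype)) := by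
  constructor
  · obtain ⟨e1⟩ := CCL.cokAux (LinearMap.range (h 0 0)) (LinearMap.range (h 1 0)) (v 0 0)
      (ω 0) (hω 0)
    obtain ⟨e2⟩ := CCL.cokAux (LinearMap.range (v 0 0)) (LinearMap.range (v 0 1)) (h 0 0)
      (υ 0) (hυ 0)
    exact ⟨e1.trans ((Submodule.quotEquivOfEq _ _ (sup_comm _ _)).trans e2.symm)⟩
  · intro n
    obtain ⟨e1⟩ := CCL.kerAux (LinearMap.range (h (n + 2) 0)) (LinearMap.range (h (n + 1) 0))
      (LinearMap.range (h n 0)) (v (n + 1) 0) (v n 0) (ω n) (hω n) (ω (n + 1)) (hω (n + 1))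
    obtain ⟨e2⟩ := CCL.kerAux (LinearMap.range (v 0 (n + 2))) (LinearMap.range (v 0 (n + 1)))
      (LinearMap.range (v 0 n)) (h 0 (n + 1)) (h 0 n) (υ n) (hυ n) (υ (n + 1)) (hυ (n + 1))
    obtain ⟨e3⟩ := CCL.gridT n M (fun i j => inferInstance) (fun i j => inferInstance)
      h v hcomm hrow hcol
    exact ⟨e1.trans (e3.trans e2.symm)⟩
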